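/- Combined estimate: under the separation hypotheses |y_i − x_j| > d − 2c, |y_i − y_j| > d − 2c for i ≠ j, error bounds |y_j − x_j| ≤ c·ε with ε = q^{4^k} ≤ 1, and with M = (1+c/(d−2c))^n − 1, N = (1+n(c/(d−2c))²)^{n−1} − 1, the quantity Y_{ij} = 1 − ((y_i − x_j)/(y_i − y_j))·R_j·Z_j satisfies |Y_{ij}| ≤ ε·[c/(d−2c) + (1 + cε/(d−2c))(εN + M(1 + ε²N))], where R_j = (1 + ((y_j−x_j)/α_j)∑_{l≠j} α_l(x_l−y_l)/((y_j−x_l)(y_j−y_l)))^{α_j−1} and Z_j = ∏_{s≠j}((y_j−x_s)/(y_j−y_s))^{α_s}. -/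

import Mathlib

open Finset

lemma aux_pow_sub_one {z : ℂ} {t : ℝ} (ht : 0 ≤ t) (hz : ‖z‖ ≤ t) (p : ℕ) :
    ‖(1 + z) ^ p - 1‖ ≤ (1 + t) ^ p - 1 := by
  induction p with
  | zero => simp
  | succ p ih =>
    have hP : (1 + z) ^ (p + 1) - 1 = ((1 + z) ^ p - 1) * (1 + z) + z := by ring
    have h1z : ‖1 + z‖ ≤ 1 + t := by
      calc ‖1 + z‖ ≤ ‖(1:ℂ)‖ + ‖z‖ := norm_add_le _ _
        _ ≤ 1 + t := by simpa using hz
    have h0 : (0:ℝ) ≤ (1 + t) ^ p - 1 := by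
      have h1 : (1:ℝ) ≤ (1 + t) ^ p := by
        calc (1:ℝ) = 1 ^ p := (one_pow p).symm
          _ ≤ (1 + t) ^ p := pow_le_pow_left₀ zero_le_one (by linarith) p
      linarith
    rw [hP]
    calc ‖((1 + z) ^ p - 1) * (1 + z) + z‖
        ≤ ‖((1 + z) ^ p - 1) * (1 + z)‖ + ‖z‖ := norm_add_le _ _
      _ = ‖(1 + z) ^ p - 1‖ * ‖1 + z‖ + ‖z‖ := by rw [norm_mul]
      _ ≤ ((1 + t) ^ p - 1) * (1 + t) + t :=
          add_le_add (mul_le_mul ih h1z (norm_nonneg _) h0) hz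
      _ = (1 + t) ^ (p + 1) - 1 := by ring

lemma aux_eps_pow {ε t : ℝ} (hε0 : 0 ≤ ε) (hε1 : ε ≤ 1) (ht : 0 ≤ t) (q : ℕ) :
    (1 + ε * t) ^ q ≤ 1 + ε * ((1 + t) ^ q - 1) := by
  induction q with
  | zero => simp
  | succ q ih =>
    have hA : (0:ℝ) ≤ (1 + t) ^ q - 1 := by
      have h1 : (1:ℝ) ≤ (1 + t) ^ q := by
        calc (1:ℝ) = 1 ^ q := (one_pow q).symm
          _ ≤ (1 + t) ^ q := pow_le_pow_left₀ zero_le_one (by linarith) q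
      linarith
    have h0 : (0:ℝ) ≤ 1 + ε * t := by nlinarith [mul_nonneg hε0 ht]
    calc (1 + ε * t) ^ (q + 1) = (1 + ε * t) ^ q * (1 + ε * t) := by ring
      _ ≤ (1 + ε * ((1 + t) ^ q - 1)) * (1 + ε * t) := mul_le_mul_of_nonneg_right ih h0
      _ ≤ 1 + ε * ((1 + t) ^ (q + 1) - 1) := by
          rw [pow_succ]
          nlinarith [mul_nonneg (mul_nonneg (mul_nonneg hε0 (by linarith : (0:ℝ) ≤ 1 - ε)) hA) ht]

lemma aux_prod_sub_one {ι : Type*} (S : Finset ι) (w : ι → ℂ) (b : ι → ℝ)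
    (hb : ∀ s ∈ S, 0 ≤ b s) (hw : ∀ s ∈ S, ‖w s - 1‖ ≤ b s) :
    ‖∏ s ∈ S, w s - 1‖ ≤ ∏ s ∈ S, (1 + b s) - 1 := by
  induction S using Finset.cons_induction with
  | empty => simp
  | cons a S ha ih =>
    rw [Finset.prod_cons, Finset.prod_cons]
    have hb' := fun s hs => hb s (Finset.mem_cons_of_mem hs)
    have hw' := fun s hs => hw s (Finset.mem_cons_of_mem hs)
    have ihS := ih hb' hw'
    have hba : 0 ≤ b a := hb a (Finset.mem_cons_self a S)
    have hwa := hw a (Finset.mem_cons_self a S)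
    have hprod1 : (1:ℝ) ≤ ∏ s ∈ S, (1 + b s) := by
      have h := Finset.prod_le_prod (f := fun _ : ι => (1:ℝ)) (g := fun s => 1 + b s)
        (fun s _ => zero_le_one) (fun s hs => by show (1:ℝ) ≤ 1 + b s; linarith [hb' s hs])
      simpa using h
    have hPle : ‖∏ s ∈ S, w s‖ ≤ ∏ s ∈ S, (1 + b s) := by
      have h := norm_add_le (∏ s ∈ S, w s - 1) 1
      have he : ∏ s ∈ S, w s - 1 + 1 = ∏ s ∈ S, w s := by ring
      rw [he, norm_one] at h
      linarith
    have hdec : w a * ∏ s ∈ S, w s - 1 = (w a - 1) * ∏ s ∈ S, w s + (∏ s ∈ S, w s - 1) := by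
      ring
    rw [hdec]
    calc ‖(w a - 1) * ∏ s ∈ S, w s + (∏ s ∈ S, w s - 1)‖
        ≤ ‖(w a - 1) * ∏ s ∈ S, w s‖ + ‖∏ s ∈ S, w s - 1‖ :=
          norm_add_le _ _
      _ = ‖w a - 1‖ * ‖∏ s ∈ S, w s‖ + ‖∏ s ∈ S, w s - 1‖ := by
          rw [norm_mul]
      _ ≤ b a * ∏ s ∈ S, (1 + b s) + (∏ s ∈ S, (1 + b s) - 1) :=
          add_le_add (mul_le_mul hwa hPle (norm_nonneg _) hba) ihS
      _ = (1 + b a) * ∏ s ∈ S, (1 + b s) - 1 := by ring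

lemma aux_final (A R Z : ℂ) (a r z : ℝ)
    (h1 : ‖1 - A‖ ≤ a) (h2 : ‖1 - R‖ ≤ r)
    (h3 : ‖1 - Z‖ ≤ z)
    (ha : 0 ≤ a) (hr : 0 ≤ r) (hz : 0 ≤ z) :
    ‖1 - A * R * Z‖ ≤ a + (1 + a) * r + (1 + a) * (1 + r) * z := by
  have habs : ∀ (W : ℂ) (u : ℝ), ‖1 - W‖ ≤ u → ‖W‖ ≤ 1 + u := by
    intro W u hu
    have h := norm_add_le (W - 1) 1
    have he : W - 1 + 1 = W := by ring
    rw [he, norm_one] at h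
    rw [norm_sub_rev] at hu
    linarith
  have hA := habs A a h1
  have hR := habs R r h2
  have hdec : (1 : ℂ) - A * R * Z = (1 - A) + (A * (1 - R) + A * R * (1 - Z)) := by ring
  rw [hdec]
  calc ‖(1 - A) + (A * (1 - R) + A * R * (1 - Z))‖
      ≤ ‖1 - A‖ + ‖A * (1 - R) + A * R * (1 - Z)‖ :=
        norm_add_le _ _
    _ ≤ ‖1 - A‖ + (‖A * (1 - R)‖ + ‖A * R * (1 - Z)‖) := by
        linarith [norm_add_le (A * (1 - R)) (A * R * (1 - Z))]
    _ ≤ a + ((1 + a) * r + (1 + a) * (1 + r) * z) := by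
        rw [norm_mul, norm_mul, norm_mul]
        refine add_le_add h1 (add_le_add ?_ ?_)
        · exact mul_le_mul hA h2 (norm_nonneg _) (by linarith)
        · exact mul_le_mul (mul_le_mul hA hR (norm_nonneg _) (by linarith)) h3
            (norm_nonneg _) (mul_nonneg (by linarith) (by linarith))
    _ = a + (1 + a) * r + (1 + a) * (1 + r) * z := by ring

/-- Combined estimate for `Y_{ij} = 1 − ((y_i − x_j)/(y_i − y_j))·R_j·Z_j`:
`|Y_{ij}| ≤ ε·[c/(d−2c) + (1 + cε/(d−2c))·(εN + M(1 + ε²N))]`. -/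
theorem stmt_19 (m n : ℕ) (hm : 1 ≤ m) (hn : 1 ≤ n)
    (α : Fin m → ℕ) (hα : ∀ i, 0 < α i) (hsum : ∑ j, α j = n)
    (x : Fin m → ℂ) (hx : Function.Injective x)
    (c d ε : ℝ) (hc : 0 < c) (hd2c : 0 < d - 2 * c) (hε0 : 0 ≤ ε) (hε1 : ε ≤ 1)
    (y : Fin m → ℂ) (hyx : ∀ j, ‖y j - x j‖ ≤ c * ε)
    (hsep1 : ∀ i j : Fin m, i ≠ j → d - 2 * c < ‖y i - x j‖)
    (hsep2 : ∀ i j : Fin m, i ≠ j → d - 2 * c < ‖y i - y j‖)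
    (i j : Fin m) (hij : i ≠ j) :
    ‖1 - ((y i - x j) / (y i - y j)) *
        (1 + ((y j - x j) / (α j : ℂ)) *
            ∑ l ∈ univ.erase j, (α l : ℂ) * (x l - y l) /
              ((y j - x l) * (y j - y l))) ^ (α j - 1) *
        ∏ s ∈ univ.erase j, ((y j - x s) / (y j - y s)) ^ (α s)‖ ≤
      ε * (c / (d - 2 * c) +
        (1 + c * ε / (d - 2 * c)) *
          (ε * ((1 + (n : ℝ) * (c / (d - 2 * c)) ^ 2) ^ (n - 1) - 1) +
            ((1 + c / (d - 2 * c)) ^ n - 1) *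
              (1 + ε ^ 2 * ((1 + (n : ℝ) * (c / (d - 2 * c)) ^ 2) ^ (n - 1) - 1)))) := by
  have he0 : (0:ℝ) < d - 2 * c := hd2c
  have hne' : d - 2 * c ≠ 0 := ne_of_gt he0
  have hce : (0:ℝ) ≤ c / (d - 2 * c) := le_of_lt (div_pos hc he0)
  have hcε : (0:ℝ) ≤ c * ε := mul_nonneg hc.le hε0
  have hsplit : α j + ∑ l ∈ univ.erase j, α l = n := by
    rw [Finset.add_sum_erase univ α (mem_univ j)]; exact hsum
  have hrest : ∑ l ∈ univ.erase j, α l ≤ n := by omega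
  have hαj1 : 1 ≤ α j := hα j
  have hαjn : α j - 1 ≤ n - 1 := by omega
  have hT0 : (0:ℝ) ≤ (n : ℝ) * (c / (d - 2 * c)) ^ 2 := by positivity
  have hW0 : (0:ℝ) ≤ ε ^ 2 * ((n : ℝ) * (c / (d - 2 * c)) ^ 2) :=
    mul_nonneg (sq_nonneg ε) hT0
  have hε2 : ε ^ 2 ≤ 1 := by nlinarith
  -- nonnegativity of N and M
  have hNN0 : (0:ℝ) ≤ (1 + (n : ℝ) * (c / (d - 2 * c)) ^ 2) ^ (n - 1) - 1 := by
    have h1 : (1:ℝ) ≤ (1 + (n : ℝ) * (c / (d - 2 * c)) ^ 2) ^ (n - 1) := by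
      calc (1:ℝ) = 1 ^ (n - 1) := (one_pow _).symm
        _ ≤ _ := pow_le_pow_left₀ zero_le_one (by linarith) _
    linarith
  have hMM0 : (0:ℝ) ≤ (1 + c / (d - 2 * c)) ^ n - 1 := by
    have h1 : (1:ℝ) ≤ (1 + c / (d - 2 * c)) ^ n := by
      calc (1:ℝ) = 1 ^ n := (one_pow _).symm
        _ ≤ _ := pow_le_pow_left₀ zero_le_one (by linarith) _
    linarith
  -- bound on 1 - A
  have h1A : ‖1 - (y i - x j) / (y i - y j)‖ ≤ ε * (c / (d - 2 * c)) := by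
    have hyy : d - 2 * c < ‖y i - y j‖ := hsep2 i j hij
    have hne : y i - y j ≠ 0 := by
      intro h; rw [h] at hyy; simp at hyy; linarith
    have hrw : (1:ℂ) - (y i - x j) / (y i - y j) = (x j - y j) / (y i - y j) := by
      field_simp
      ring
    rw [hrw, norm_div]
    have hxy : ‖x j - y j‖ ≤ c * ε := by
      rw [norm_sub_rev]; exact hyx j
    calc ‖x j - y j‖ / ‖y i - y j‖ ≤ (c * ε) / (d - 2 * c) :=
        div_le_div₀ hcε hxy he0 hyy.le
      _ = ε * (c / (d - 2 * c)) := by ring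
  -- bound on w
  have hwabs : ‖((y j - x j) / (α j : ℂ)) *
      ∑ l ∈ univ.erase j, (α l : ℂ) * (x l - y l) / ((y j - x l) * (y j - y l))‖ ≤
      ε ^ 2 * ((n : ℝ) * (c / (d - 2 * c)) ^ 2) := by
    have hterm : ∀ l ∈ univ.erase j,
        ‖(α l : ℂ) * (x l - y l) / ((y j - x l) * (y j - y l))‖ ≤
        (α l : ℝ) * (c * ε) / ((d - 2 * c) * (d - 2 * c)) := by
      intro l hl
      have hlj : l ≠ j := (Finset.mem_erase.mp hl).1
      have h1 : d - 2 * c < ‖y j - x l‖ := hsep1 j l (Ne.symm hlj)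
      have h2 : d - 2 * c < ‖y j - y l‖ := hsep2 j l (Ne.symm hlj)
      rw [norm_div, norm_mul, norm_mul, Complex.norm_natCast]
      have hxy : ‖x l - y l‖ ≤ c * ε := by
        rw [norm_sub_rev]; exact hyx l
      exact div_le_div₀ (mul_nonneg (Nat.cast_nonneg _) hcε)
        (mul_le_mul_of_nonneg_left hxy (Nat.cast_nonneg _))
        (mul_pos he0 he0)
        (mul_le_mul h1.le h2.le he0.le (norm_nonneg _))
    have hsum1 : ‖∑ l ∈ univ.erase j,
        (α l : ℂ) * (x l - y l) / ((y j - x l) * (y j - y l))‖ ≤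
        (n : ℝ) * ((c * ε) / ((d - 2 * c) * (d - 2 * c))) := by
      calc ‖∑ l ∈ univ.erase j,
            (α l : ℂ) * (x l - y l) / ((y j - x l) * (y j - y l))‖
          ≤ ∑ l ∈ univ.erase j,
            ‖(α l : ℂ) * (x l - y l) / ((y j - x l) * (y j - y l))‖ :=
            norm_sum_le _ _
        _ ≤ ∑ l ∈ univ.erase j, (α l : ℝ) * (c * ε) / ((d - 2 * c) * (d - 2 * c)) :=
            Finset.sum_le_sum hterm
        _ = (∑ l ∈ univ.erase j, (α l : ℝ)) * ((c * ε) / ((d - 2 * c) * (d - 2 * c))) := by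
            rw [Finset.sum_mul]
            exact Finset.sum_congr rfl fun l _ => by rw [mul_div_assoc]
        _ ≤ (n : ℝ) * ((c * ε) / ((d - 2 * c) * (d - 2 * c))) := by
            apply mul_le_mul_of_nonneg_right _ (div_nonneg hcε (by positivity))
            have hcast : (∑ l ∈ univ.erase j, (α l : ℝ)) =
                ((∑ l ∈ univ.erase j, α l : ℕ) : ℝ) := by push_cast; rfl
            rw [hcast]
            exact_mod_cast hrest
    have hfirst : ‖(y j - x j) / (α j : ℂ)‖ ≤ c * ε := by
      rw [norm_div, Complex.norm_natCast]
      have h1 : (1:ℝ) ≤ (α j : ℝ) := by exact_mod_cast hαj1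
      exact le_trans (div_le_self (norm_nonneg _) h1) (hyx j)
    rw [norm_mul]
    calc ‖(y j - x j) / (α j : ℂ)‖ *
          ‖∑ l ∈ univ.erase j,
            (α l : ℂ) * (x l - y l) / ((y j - x l) * (y j - y l))‖
        ≤ (c * ε) * ((n : ℝ) * ((c * ε) / ((d - 2 * c) * (d - 2 * c)))) :=
          mul_le_mul hfirst hsum1 (norm_nonneg _) hcε
      _ = ε ^ 2 * ((n : ℝ) * (c / (d - 2 * c)) ^ 2) := by
          field_simp
  -- bound on 1 - R
  have hR1b : ‖1 - (1 + ((y j - x j) / (α j : ℂ)) *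
      ∑ l ∈ univ.erase j, (α l : ℂ) * (x l - y l) /
        ((y j - x l) * (y j - y l))) ^ (α j - 1)‖ ≤
      ε ^ 2 * ((1 + (n : ℝ) * (c / (d - 2 * c)) ^ 2) ^ (n - 1) - 1) := by
    rw [norm_sub_rev]
    calc ‖(1 + ((y j - x j) / (α j : ℂ)) *
          ∑ l ∈ univ.erase j, (α l : ℂ) * (x l - y l) /
            ((y j - x l) * (y j - y l))) ^ (α j - 1) - 1‖
        ≤ (1 + ε ^ 2 * ((n : ℝ) * (c / (d - 2 * c)) ^ 2)) ^ (α j - 1) - 1 :=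
          aux_pow_sub_one hW0 hwabs _
      _ ≤ (1 + ε ^ 2 * ((n : ℝ) * (c / (d - 2 * c)) ^ 2)) ^ (n - 1) - 1 := by
          have hb1 : (1:ℝ) ≤ 1 + ε ^ 2 * ((n : ℝ) * (c / (d - 2 * c)) ^ 2) := by linarith
          have := pow_le_pow_right₀ hb1 hαjn
          linarith
      _ ≤ ε ^ 2 * ((1 + (n : ℝ) * (c / (d - 2 * c)) ^ 2) ^ (n - 1) - 1) := by
          have := aux_eps_pow (sq_nonneg ε) hε2 hT0 (n - 1)
          linarith
  -- bound on 1 - Z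
  have hεC1 : (1:ℝ) ≤ 1 + ε * (c / (d - 2 * c)) := by nlinarith [mul_nonneg hε0 hce]
  have hZelem : ∀ s ∈ univ.erase j,
      ‖(((y j - x s) / (y j - y s)) ^ (α s) : ℂ) - 1‖ ≤
      (1 + ε * (c / (d - 2 * c))) ^ (α s) - 1 := by
    intro s hs
    have hsj : s ≠ j := (Finset.mem_erase.mp hs).1
    have hys : d - 2 * c < ‖y j - y s‖ := hsep2 j s (Ne.symm hsj)
    have hne : y j - y s ≠ 0 := by
      intro h; rw [h] at hys; simp at hys; linarith
    have hrw : (y j - x s) / (y j - y s) = 1 + (y s - x s) / (y j - y s) := by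
      field_simp
      ring
    rw [hrw]
    apply aux_pow_sub_one (mul_nonneg hε0 hce)
    rw [norm_div]
    calc ‖y s - x s‖ / ‖y j - y s‖ ≤ (c * ε) / (d - 2 * c) :=
        div_le_div₀ hcε (hyx s) he0 hys.le
      _ = ε * (c / (d - 2 * c)) := by ring
  have hbnn : ∀ s ∈ univ.erase j, (0:ℝ) ≤ (1 + ε * (c / (d - 2 * c))) ^ (α s) - 1 := by
    intro s _
    have h1 : (1:ℝ) ≤ (1 + ε * (c / (d - 2 * c))) ^ (α s) := by
      calc (1:ℝ) = 1 ^ (α s) := (one_pow _).symm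
        _ ≤ _ := pow_le_pow_left₀ zero_le_one hεC1 _
    linarith
  have hZ1b : ‖1 - ∏ s ∈ univ.erase j, ((y j - x s) / (y j - y s)) ^ (α s)‖ ≤
      ε * ((1 + c / (d - 2 * c)) ^ n - 1) := by
    rw [norm_sub_rev]
    have h1 : ‖(∏ s ∈ univ.erase j, ((y j - x s) / (y j - y s)) ^ (α s)) - 1‖ ≤
        (∏ s ∈ univ.erase j, (1 + ((1 + ε * (c / (d - 2 * c))) ^ (α s) - 1))) - 1 :=
      aux_prod_sub_one (univ.erase j) _ _ hbnn hZelem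
    have h2 : ∏ s ∈ univ.erase j, (1 + ((1 + ε * (c / (d - 2 * c))) ^ (α s) - 1)) =
        (1 + ε * (c / (d - 2 * c))) ^ (∑ s ∈ univ.erase j, α s) := by
      rw [← Finset.prod_pow_eq_pow_sum]
      exact Finset.prod_congr rfl fun s _ => by ring
    rw [h2] at h1
    have h3 : (1 + ε * (c / (d - 2 * c))) ^ (∑ s ∈ univ.erase j, α s) ≤
        (1 + ε * (c / (d - 2 * c))) ^ n := pow_le_pow_right₀ hεC1 hrest
    have h4 := aux_eps_pow hε0 hε1 hce n
    linarith
  -- assemble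
  calc ‖1 - ((y i - x j) / (y i - y j)) *
        (1 + ((y j - x j) / (α j : ℂ)) *
            ∑ l ∈ univ.erase j, (α l : ℂ) * (x l - y l) /
              ((y j - x l) * (y j - y l))) ^ (α j - 1) *
        ∏ s ∈ univ.erase j, ((y j - x s) / (y j - y s)) ^ (α s)‖
      ≤ ε * (c / (d - 2 * c)) +
        (1 + ε * (c / (d - 2 * c))) * (ε ^ 2 * ((1 + (n : ℝ) * (c / (d - 2 * c)) ^ 2) ^ (n - 1) - 1)) +
        (1 + ε * (c / (d - 2 * c))) * (1 + ε ^ 2 * ((1 + (n : ℝ) * (c / (d - 2 * c)) ^ 2) ^ (n - 1) - 1)) *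
          (ε * ((1 + c / (d - 2 * c)) ^ n - 1)) :=
        aux_final _ _ _ _ _ _ h1A hR1b hZ1b (mul_nonneg hε0 hce)
          (mul_nonneg (sq_nonneg ε) hNN0) (mul_nonneg hε0 hMM0)
    _ = ε * (c / (d - 2 * c) +
        (1 + c * ε / (d - 2 * c)) *
          (ε * ((1 + (n : ℝ) * (c / (d - 2 * c)) ^ 2) ^ (n - 1) - 1) +
            ((1 + c / (d - 2 * c)) ^ n - 1) *
              (1 + ε ^ 2 * ((1 + (n : ℝ) * (c / (d - 2 * c)) ^ 2) ^ (n - 1) - 1)))) := by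
        ring
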